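/- Let (X,d) be a Polish metric space with d unbounded, and let ℓ_∞(X) be the equivalence relation on X^ω defined by x⃗ E y⃗ iff sup_i d(x(i), y(i)) < ∞. Then E_1 ≤_B ℓ_∞(X) ≤_B ℓ_∞, where E_1 is the eventual-agreement relation on (2^ω)^ω and ℓ_∞ is the bounded-difference relation on ℝ^ω. -/
import Mathlib


/-- For a Polish metric space `X` with unbounded metric,
`E₁ ≤_B ℓ_∞(X) ≤_B ℓ_∞`. -/
theorem E1_le_linftyX_le_linfty
    (X : Type*) [MetricSpace X] [CompleteSpace X] [SecondCountableTopology X]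
    [MeasurableSpace X] [BorelSpace X]
    (hunb : ∀ C : ℝ, ∃ x y : X, C < dist x y) :
    (∃ τ : (ℕ → ℕ → Bool) → (ℕ → X), Measurable τ ∧
      ∀ x y : ℕ → ℕ → Bool,
        (∃ m, ∀ n ≥ m, x n = y n) ↔ (∃ C : ℝ, ∀ i, dist (τ x i) (τ y i) < C)) ∧
    (∃ π : (ℕ → X) → (ℕ → ℝ), Measurable π ∧
      ∀ x y : ℕ → X,
        (∃ C : ℝ, ∀ i, dist (x i) (y i) < C) ↔ (∃ C : ℝ, ∀ n, |π x n - π y n| < C)) := by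
  classical
  haveI : Nonempty X := ⟨(hunb 0).choose⟩
  constructor
  · -- E₁ ≤_B ℓ_∞(X)
    choose u v huv using fun n : ℕ => hunb (2 * n)
    set p : X := u 0 with hp
    set q : ℕ → X := fun n => if (n : ℝ) ≤ dist p (u n) then u n else v n with hq
    have hq' : ∀ n : ℕ, (n : ℝ) ≤ dist p (q n) := by
      intro n
      by_cases h : (n : ℝ) ≤ dist p (u n)
      · simp [hq, h]
      · push_neg at h
        have h2 := huv n
        have h3 : dist (u n) (v n) ≤ dist (u n) p + dist p (v n) := dist_triangle _ _ _
        have h4 : dist (u n) p = dist p (u n) := dist_comm _ _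
        have : (n : ℝ) ≤ dist p (v n) := by linarith
        simpa [hq, not_le.2 h] using this
    refine ⟨fun x i => if x (Nat.pairEquiv.symm i).1 (Nat.pairEquiv.symm i).2 = true
        then q (Nat.pairEquiv.symm i).1 else p, ?_, ?_⟩
    · apply measurable_pi_lambda
      intro i
      have hev : Measurable fun x : ℕ → ℕ → Bool =>
          x (Nat.pairEquiv.symm i).1 (Nat.pairEquiv.symm i).2 :=
        (measurable_pi_apply _).comp (measurable_pi_apply _)
      exact Measurable.comp (measurable_of_countable
        (fun b : Bool => if b = true then q (Nat.pairEquiv.symm i).1 else p)) hev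
    · intro x y
      constructor
      · rintro ⟨m, hm⟩
        refine ⟨(∑ n ∈ Finset.range m, dist p (q n)) + 1, fun i => ?_⟩
        rcases hnk : Nat.pairEquiv.symm i with ⟨n, k⟩
        simp only [hnk]
        have hsum : 0 ≤ ∑ n ∈ Finset.range m, dist p (q n) :=
          Finset.sum_nonneg fun _ _ => dist_nonneg
        by_cases hnm : m ≤ n
        · have hxy : x n k = y n k := congrFun (hm n hnm) k
          rw [hxy, dist_self]
          linarith
        · push_neg at hnm
          have hle : dist (if x n k = true then q n else p)
              (if y n k = true then q n else p) ≤ dist p (q n) := by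
            by_cases h1 : x n k = true <;> by_cases h2 : y n k = true <;>
              simp [h1, h2, dist_comm, dist_self, dist_nonneg]
          have hmem : dist p (q n) ≤ ∑ n ∈ Finset.range m, dist p (q n) :=
            Finset.single_le_sum (fun _ _ => dist_nonneg) (Finset.mem_range.2 hnm)
          calc dist (if x n k = true then q n else p) (if y n k = true then q n else p)
              ≤ dist p (q n) := hle
            _ < _ := by linarith
      · rintro ⟨C, hC⟩
        refine ⟨⌈C⌉₊, fun n hn => ?_⟩
        funext k
        by_contra hne
        have := hC (Nat.pairEquiv (n, k))
        simp only [Equiv.symm_apply_apply] at this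
        have hdist : dist (if x n k = true then q n else p)
            (if y n k = true then q n else p) = dist p (q n) := by
          rcases Bool.eq_false_or_eq_true (x n k) with h1 | h1 <;>
            rcases Bool.eq_false_or_eq_true (y n k) with h2 | h2 <;>
            simp_all [dist_comm]
        rw [hdist] at this
        have h1 : C ≤ (⌈C⌉₊ : ℝ) := Nat.le_ceil C
        have h2 : ((⌈C⌉₊ : ℕ) : ℝ) ≤ (n : ℝ) := Nat.cast_le.2 hn
        have h3 := hq' n
        linarith
  · -- ℓ_∞(X) ≤_B ℓ_∞
    obtain ⟨d, hd⟩ : ∃ d : ℕ → X, DenseRange d :=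
      ⟨TopologicalSpace.denseSeq X, TopologicalSpace.denseRange_denseSeq X⟩
    refine ⟨fun x n => dist (x (Nat.pairEquiv.symm n).1) (d (Nat.pairEquiv.symm n).2),
      ?_, ?_⟩
    · apply measurable_pi_lambda
      intro n
      exact (measurable_pi_apply _).dist measurable_const
    · intro x y
      constructor
      · rintro ⟨C, hC⟩
        exact ⟨C, fun n => lt_of_le_of_lt (abs_dist_sub_le _ _ _) (hC _)⟩
      · rintro ⟨C, hC⟩
        refine ⟨C + 1, fun i => ?_⟩
        have key : dist (x i) (y i) ≤ C := by
          apply le_of_forall_pos_le_add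
          intro ε hε
          obtain ⟨k, hk⟩ := hd.exists_dist_lt (y i) (half_pos hε)
          have h1 := hC (Nat.pairEquiv (i, k))
          simp only [Equiv.symm_apply_apply] at h1
          have h2 : dist (x i) (d k) - dist (y i) (d k) < C := lt_of_abs_lt h1
          have h3 : dist (x i) (y i) ≤ dist (x i) (d k) + dist (d k) (y i) :=
            dist_triangle _ _ _
          have h4 : dist (d k) (y i) = dist (y i) (d k) := dist_comm _ _
          linarith
        linarith
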